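/- (Extremal stop-loss transforms) Let 𝓛₀₁ be the set of all Borel probability measures on ℝ with mean 0 and variance 1. For every x∈ℝ, sup_{μ∈𝓛₀₁} ∫_x^∞ (1 − F_μ(y)) dy = (√(x²+1) − x)/2 and inf_{μ∈𝓛₀₁} ∫_x^∞ (1 − F_μ(y)) dy = max(−x, 0). -/

import Mathlib

open MeasureTheory Set
open scoped ENNReal

/-- The set of all Borel probability measures on ℝ with mean 0 and variance 1. -/
def stdMeasures : Set (Measure ℝ) :=
  {μ | IsProbabilityMeasure μ ∧ (∫ x, x ∂μ) = 0 ∧ (∫ x, x ^ 2 ∂μ) = 1}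

/-- The distribution function of a measure: `F_μ(x) = μ((-∞, x])`. -/
noncomputable def distFun (μ : Measure ℝ) (x : ℝ) : ℝ := (μ (Iic x)).toReal

/-- The stop-loss transform of `μ` at `x`: `Π_μ(x) = ∫_x^∞ (1 − F_μ(y)) dy`. -/
noncomputable def stopLoss (μ : Measure ℝ) (x : ℝ) : ℝ :=
  ∫ y in Ioi x, (1 - distFun μ y)

/-! ### Auxiliary lemmas -/

lemma aux_integrable_dirac {f : ℝ → ℝ} (a : ℝ) : Integrable f (Measure.dirac a) :=
  (integrable_const (f a)).congr (MeasureTheory.ae_eq_dirac f).symm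

/-- The two-point measure with mass `v²/(1+v²)` at `-1/v` and `1/(1+v²)` at `v`. -/
noncomputable def twoPt (v : ℝ) : Measure ℝ :=
  ENNReal.ofReal (v ^ 2 / (1 + v ^ 2)) • Measure.dirac (-1 / v)
    + ENNReal.ofReal (1 / (1 + v ^ 2)) • Measure.dirac v

lemma twoPt_prob (v : ℝ) : IsProbabilityMeasure (twoPt v) := by
  constructor
  have h : (0:ℝ) < 1 + v ^ 2 := by positivity
  simp only [twoPt, Measure.coe_add, Measure.coe_smul, Pi.add_apply, Pi.smul_apply,
    measure_univ, smul_eq_mul, mul_one]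
  rw [← ENNReal.ofReal_add (by positivity) (by positivity), ← ENNReal.ofReal_one]
  congr 1
  field_simp
  ring

lemma twoPt_integral (v : ℝ) (f : ℝ → ℝ) :
    ∫ t, f t ∂(twoPt v) = v ^ 2 / (1 + v ^ 2) * f (-1 / v) + 1 / (1 + v ^ 2) * f v := by
  have h : (0:ℝ) < 1 + v ^ 2 := by positivity
  rw [twoPt, integral_add_measure ((aux_integrable_dirac _).smul_measure ENNReal.ofReal_ne_top)
      ((aux_integrable_dirac _).smul_measure ENNReal.ofReal_ne_top),
    integral_smul_measure, integral_smul_measure, integral_dirac, integral_dirac,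
    ENNReal.toReal_ofReal (by positivity), ENNReal.toReal_ofReal (by positivity)]
  simp [smul_eq_mul]

lemma twoPt_mem (v : ℝ) (hv : 0 < v) : twoPt v ∈ stdMeasures := by
  refine ⟨twoPt_prob v, ?_, ?_⟩
  · rw [twoPt_integral]
    field_simp
    ring
  · rw [twoPt_integral]
    field_simp

/-- Key identity: the stop-loss transform equals `∫ (t-x)⁺ dμ`. -/
lemma stopLoss_eq (μ : Measure ℝ) (hp : IsProbabilityMeasure μ) (x : ℝ) :
    stopLoss μ x = ∫ t, max (t - x) 0 ∂μ := by
  haveI := hp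
  have hmeas : Measurable fun y => μ (Ioi y) :=
    Antitone.measurable (fun a b hab => measure_mono (Ioi_subset_Ioi hab))
  have h1 : ∀ y : ℝ, 1 - distFun μ y = (μ (Ioi y)).toReal := by
    intro y
    have hc : μ (Ioi y) = 1 - μ (Iic y) := by
      rw [← compl_Iic]
      exact prob_compl_eq_one_sub measurableSet_Iic
    rw [hc, ENNReal.toReal_sub_of_le prob_le_one ENNReal.one_ne_top, ENNReal.toReal_one, distFun]
  have h2 : stopLoss μ x = (∫⁻ y in Ioi x, μ (Ioi y)).toReal := by
    rw [stopLoss]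
    simp_rw [h1]
    rw [integral_toReal (hmeas.aemeasurable.restrict)
      (ae_of_all _ fun y => measure_lt_top μ _)]
  have h3 : ∫⁻ y in Ioi x, μ (Ioi y) = ∫⁻ t, ENNReal.ofReal (max (t - x) 0) ∂μ := by
    have hind : Measurable (Function.uncurry fun (y t : ℝ) =>
        (Ioi y).indicator (1 : ℝ → ℝ≥0∞) t) := by
      have : (Function.uncurry fun (y t : ℝ) => (Ioi y).indicator (1 : ℝ → ℝ≥0∞) t)
          = {p : ℝ × ℝ | p.1 < p.2}.indicator (1 : ℝ × ℝ → ℝ≥0∞) := by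
        funext p
        by_cases h : p.1 < p.2 <;>
          simp [Function.uncurry, Set.indicator, h, Set.mem_Ioi]
      rw [this]
      exact measurable_const.indicator (measurableSet_lt measurable_fst measurable_snd)
    calc ∫⁻ y in Ioi x, μ (Ioi y)
        = ∫⁻ y in Ioi x, ∫⁻ t, (Ioi y).indicator (1 : ℝ → ℝ≥0∞) t ∂μ := by
          simp_rw [lintegral_indicator_one measurableSet_Ioi]
      _ = ∫⁻ t, (∫⁻ y in Ioi x, (Ioi y).indicator (1 : ℝ → ℝ≥0∞) t) ∂μ :=
          lintegral_lintegral_swap hind.aemeasurable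
      _ = ∫⁻ t, ENNReal.ofReal (max (t - x) 0) ∂μ := by
          refine lintegral_congr fun t => ?_
          have : ∀ y : ℝ, (Ioi y).indicator (1 : ℝ → ℝ≥0∞) t
              = (Iio t).indicator (1 : ℝ → ℝ≥0∞) y := by
            intro y
            by_cases h : y < t <;> simp [Set.indicator, h, Set.mem_Ioi, Set.mem_Iio]
          simp_rw [this]
          rw [lintegral_indicator_one measurableSet_Iio, Measure.restrict_apply measurableSet_Iio]
          rw [show Iio t ∩ Ioi x = Ioo x t by rw [Set.inter_comm]; exact Set.Ioi_inter_Iio]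
          rw [Real.volume_Ioo]
          rcases le_total (t - x) 0 with h | h
          · rw [max_eq_right h, ENNReal.ofReal_eq_zero.mpr h, ENNReal.ofReal_zero]
          · rw [max_eq_left h]
  have h4 : ∫ t, max (t - x) 0 ∂μ = (∫⁻ t, ENNReal.ofReal (max (t - x) 0) ∂μ).toReal := by
    apply integral_eq_lintegral_of_nonneg_ae (ae_of_all _ fun t => le_max_right _ _)
    exact ((measurable_id.sub measurable_const).max measurable_const).aestronglyMeasurable
  rw [h2, h3, h4]

lemma integrable_of_std {μ : Measure ℝ} (hμ : μ ∈ stdMeasures) :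
    Integrable (fun t => t ^ 2) μ ∧ Integrable (fun t : ℝ => t) μ := by
  obtain ⟨hp, hm, hv⟩ := hμ
  haveI := hp
  have hint2 : Integrable (fun t => t ^ 2) μ := by
    by_contra h
    rw [integral_undef h] at hv
    norm_num at hv
  refine ⟨hint2, ?_⟩
  have hg : Integrable (fun t => (1 + t ^ 2) / 2) μ := ((integrable_const 1).add hint2).div_const 2
  refine hg.mono' measurable_id.aestronglyMeasurable (ae_of_all _ fun t => ?_)
  have h1 : ‖t‖ = |t| := rfl
  rw [h1]
  nlinarith [sq_nonneg (|t| - 1), sq_abs t, abs_nonneg t]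

lemma integrable_max_of_std {μ : Measure ℝ} (hμ : μ ∈ stdMeasures) (x : ℝ) :
    Integrable (fun t => max (t - x) 0) μ := by
  haveI := hμ.1
  exact ((integrable_of_std hμ).2.sub (integrable_const x)).pos_part

/-- Upper bound for the stop-loss transform. -/
lemma stopLoss_le {μ : Measure ℝ} (hμ : μ ∈ stdMeasures) (x : ℝ) :
    stopLoss μ x ≤ (Real.sqrt (x ^ 2 + 1) - x) / 2 := by
  obtain ⟨hint2, hint1⟩ := integrable_of_std hμ
  obtain ⟨hp, hm, hv⟩ := hμ
  haveI := hp
  set s := Real.sqrt (x ^ 2 + 1) with hsdef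
  have hs2 : s ^ 2 = x ^ 2 + 1 := Real.sq_sqrt (by positivity)
  have hs0 : 0 < s := Real.sqrt_pos.mpr (by positivity)
  set a := x - s with ha
  have hfun : (fun t : ℝ => (t - a) ^ 2 / (4 * s))
      = fun t => (t ^ 2 - 2 * a * t + a ^ 2) / (4 * s) := by
    funext t; ring
  have hquad : Integrable (fun t => (t - a) ^ 2 / (4 * s)) μ := by
    rw [hfun]
    exact ((hint2.sub (hint1.const_mul (2 * a))).add (integrable_const (a ^ 2))).div_const (4 * s)
  have hmax : Integrable (fun t => max (t - x) 0) μ :=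
    (hint1.sub (integrable_const x)).pos_part
  have hle : ∫ t, max (t - x) 0 ∂μ ≤ ∫ t, (t - a) ^ 2 / (4 * s) ∂μ := by
    refine integral_mono hmax hquad fun t => ?_
    apply max_le
    · rw [le_div_iff₀ (by positivity), ha]
      nlinarith [sq_nonneg (t - x - s)]
    · positivity
  have i2 : Integrable (fun t : ℝ => 2 * a * t) μ := hint1.const_mul (2 * a)
  have i3 : Integrable (fun t : ℝ => t ^ 2 - 2 * a * t) μ := hint2.sub i2
  have hcomp : ∫ t, (t - a) ^ 2 / (4 * s) ∂μ = (s - x) / 2 := by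
    rw [hfun]
    simp_rw [div_eq_mul_inv]
    rw [integral_mul_const, integral_add i3 (integrable_const (a ^ 2)),
      integral_sub hint2 i2, integral_const_mul, hm, hv, integral_const]
    simp only [measure_univ, probReal_univ, ENNReal.toReal_one, one_smul, mul_zero, sub_zero]
    have key : 1 + a ^ 2 = 2 * s * (s - x) := by
      rw [ha]; linear_combination -hs2
    rw [show (1 : ℝ) + a ^ 2 = 2 * s * (s - x) from key]
    field_simp
    ring
  rw [stopLoss_eq μ hp x]
  linarith [hle, hcomp.le, hcomp.ge]

/-- Lower bound for the stop-loss transform. -/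
lemma le_stopLoss {μ : Measure ℝ} (hμ : μ ∈ stdMeasures) (x : ℝ) :
    max (-x) 0 ≤ stopLoss μ x := by
  obtain ⟨hint2, hint1⟩ := integrable_of_std hμ
  obtain ⟨hp, hm, hv⟩ := hμ
  haveI := hp
  rw [stopLoss_eq μ hp x]
  apply max_le
  · have hsub : Integrable (fun t : ℝ => t - x) μ := hint1.sub (integrable_const x)
    have h1 : ∫ t, (t - x) ∂μ = -x := by
      rw [integral_sub hint1 (integrable_const x), hm, integral_const]
      simp [measure_univ]
    calc -x = ∫ t, (t - x) ∂μ := h1.symm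
      _ ≤ ∫ t, max (t - x) 0 ∂μ :=
        integral_mono hsub (hsub.pos_part) fun t => le_max_left _ _
  · exact integral_nonneg fun t => le_max_right _ _

lemma stopLoss_twoPt (v : ℝ) (x : ℝ) :
    stopLoss (twoPt v) x
      = v ^ 2 / (1 + v ^ 2) * max (-1 / v - x) 0 + 1 / (1 + v ^ 2) * max (v - x) 0 := by
  rw [stopLoss_eq _ (twoPt_prob v) x, twoPt_integral]

theorem extremal_stop_loss_transforms (x : ℝ) :
    sSup ((fun μ : Measure ℝ => stopLoss μ x) '' stdMeasures) =
      (Real.sqrt (x ^ 2 + 1) - x) / 2 ∧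
    sInf ((fun μ : Measure ℝ => stopLoss μ x) '' stdMeasures) =
      max (-x) 0 := by
  set s := Real.sqrt (x ^ 2 + 1) with hsdef
  have hs2 : s ^ 2 = x ^ 2 + 1 := Real.sq_sqrt (by positivity)
  have hs0 : 0 < s := Real.sqrt_pos.mpr (by positivity)
  have habs : |x| < s := by
    nlinarith [sq_abs x, abs_nonneg x]
  have hv0 : 0 < x + s := by
    have := neg_abs_le x
    linarith
  -- the extremal measure for the supremum
  have hmem : twoPt (x + s) ∈ stdMeasures := twoPt_mem _ hv0
  have hval : stopLoss (twoPt (x + s)) x = (s - x) / 2 := by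
    rw [stopLoss_twoPt]
    have hinv : -1 / (x + s) = x - s := by
      rw [div_eq_iff hv0.ne']
      nlinarith [hs2]
    rw [hinv]
    rw [show x - s - x = -s by ring, show x + s - x = s by ring]
    rw [max_eq_right (by linarith : -s ≤ 0), max_eq_left hs0.le]
    rw [mul_zero, zero_add]
    have key : (s - x) * (x + s) = 1 := by linear_combination hs2
    have hden : (0:ℝ) < 1 + (x + s) ^ 2 := by positivity
    rw [div_mul_eq_mul_div, one_mul, div_eq_div_iff hden.ne' (by norm_num : (2:ℝ) ≠ 0)]
    linear_combination (-(x + s)) * hs2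
  have hS_ne : ((fun μ : Measure ℝ => stopLoss μ x) '' stdMeasures).Nonempty :=
    ⟨_, ⟨twoPt (x + s), hmem, rfl⟩⟩
  have hub : ∀ a ∈ (fun μ : Measure ℝ => stopLoss μ x) '' stdMeasures, a ≤ (s - x) / 2 := by
    rintro a ⟨μ, hμ, rfl⟩
    exact stopLoss_le hμ x
  have hlb : ∀ a ∈ (fun μ : Measure ℝ => stopLoss μ x) '' stdMeasures, max (-x) 0 ≤ a := by
    rintro a ⟨μ, hμ, rfl⟩
    exact le_stopLoss hμ x
  have hbdd : BddBelow ((fun μ : Measure ℝ => stopLoss μ x) '' stdMeasures) :=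
    ⟨max (-x) 0, hlb⟩
  constructor
  · exact IsGreatest.csSup_eq ⟨⟨twoPt (x + s), hmem, hval⟩, hub⟩
  · refine le_antisymm ?_ (le_csInf hS_ne hlb)
    rcases lt_or_ge x 0 with hx | hx
    · -- x < 0 : infimum attained by twoPt (-1/x)
      have hw0 : 0 < -1 / x := by
        rw [div_pos_iff]
        right; constructor <;> linarith
      have hmemw : twoPt (-1 / x) ∈ stdMeasures := twoPt_mem _ hw0
      have hvalw : stopLoss (twoPt (-1 / x)) x = -x := by
        rw [stopLoss_twoPt]
        have h1 : -1 / (-1 / x) = x := by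
          field_simp
        rw [h1, sub_self, max_self, mul_zero, zero_add,
          max_eq_left (by linarith : (0:ℝ) ≤ -1 / x - x)]
        have hxne : x ≠ 0 := by linarith
        field_simp
        ring
      have : sInf ((fun μ : Measure ℝ => stopLoss μ x) '' stdMeasures) ≤ -x := by
        rw [← hvalw]
        exact csInf_le hbdd ⟨twoPt (-1 / x), hmemw, rfl⟩
      rw [max_eq_left (by linarith : (0:ℝ) ≤ -x)]
      exact this
    · -- 0 ≤ x : infimum is 0, approached along twoPt v as v → ∞
      rw [max_eq_right (by linarith : -x ≤ (0:ℝ))]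
      by_contra h
      push_neg at h
      set ε := sInf ((fun μ : Measure ℝ => stopLoss μ x) '' stdMeasures) with hε
      set v := max (x + 1) (1 / ε + 1) with hvdef
      have hvx : x < v := lt_of_lt_of_le (by linarith) (le_max_left _ _)
      have hvpos : 0 < v := lt_of_le_of_lt hx hvx
      have hvbig : 1 / ε < v := lt_of_lt_of_le (by linarith) (le_max_right _ _)
      have hmemv : twoPt v ∈ stdMeasures := twoPt_mem v hvpos
      have hvalv : stopLoss (twoPt v) x = (v - x) / (1 + v ^ 2) := by
        rw [stopLoss_twoPt]
        have h1 : -1 / v - x ≤ 0 := by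
          have : -1 / v < 0 := by
            rw [div_neg_iff]
            right; constructor <;> linarith
          linarith
        rw [max_eq_right h1, mul_zero, zero_add, max_eq_left (by linarith : (0:ℝ) ≤ v - x)]
        ring
      have hsmall : (v - x) / (1 + v ^ 2) < ε := by
        have h2 : (v - x) / (1 + v ^ 2) ≤ 1 / v := by
          rw [div_le_div_iff₀ (by positivity) hvpos]
          nlinarith
        have h3 : 1 / v < ε := by
          rw [div_lt_iff₀ hvpos]
          have : 1 / ε * ε = 1 := by field_simp
          nlinarith
        linarith
      have hge : ε ≤ (v - x) / (1 + v ^ 2) := by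
        rw [← hvalv]
        exact csInf_le hbdd ⟨twoPt v, hmemv, rfl⟩
      linarith
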